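/- arXiv:2003.05835 — 2 statements merged into one kernel-verified Lean document; each statement's English description precedes it below -/
import Mathlib

section
/- Let k ≥ 1 be an integer and let u: (0,∞) → ℝ be continuously differentiable with lim_{r→0} u(r) = 0, lim_{r→∞} u(r) = π, and ∫₀^∞ (u'(r)² + k² sin²(u(r))/r²) r dr < ∞. Then ∫₀^∞ (u'(r)² + k² sin²(u(r))/r²) r dr ≥ 4k. -/
open Real MeasureTheory

theorem stmt4 (k : ℕ) (hk : 1 ≤ k) (u : ℝ → ℝ)
    (hu : ContDiffOn ℝ 1 u (Set.Ioi 0))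
    (h0 : Filter.Tendsto u (nhdsWithin 0 (Set.Ioi 0)) (nhds 0))
    (hInf : Filter.Tendsto u Filter.atTop (nhds π))
    (hE : IntegrableOn
      (fun r : ℝ => ((deriv u r) ^ 2 + k ^ 2 * Real.sin (u r) ^ 2 / r ^ 2) * r)
      (Set.Ioi 0)) :
    (4 : ℝ) * k ≤ ∫ r in Set.Ioi (0 : ℝ),
        ((deriv u r) ^ 2 + k ^ 2 * Real.sin (u r) ^ 2 / r ^ 2) * r := by
  have hk1 : (1 : ℝ) ≤ k := by exact_mod_cast hk
  set f : ℝ → ℝ := fun r => ((deriv u r) ^ 2 + k ^ 2 * Real.sin (u r) ^ 2 / r ^ 2) * r with hf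
  have hdiff : ∀ r ∈ Set.Ioi (0 : ℝ), HasDerivAt u (deriv u r) r := by
    intro r hr
    exact ((hu.differentiableOn one_ne_zero).differentiableAt
      (isOpen_Ioi.mem_nhds hr)).hasDerivAt
  set G : ℝ → ℝ := fun r => if 0 < r then 2 * (k:ℝ) * (-Real.cos (u r)) else -(2 * (k:ℝ)) with hG
  set g' : ℝ → ℝ := fun r => 2 * (k:ℝ) * (Real.sin (u r) * deriv u r) with hg'
  -- G has derivative g' on Ioi 0
  have hGd : ∀ r ∈ Set.Ioi (0 : ℝ), HasDerivAt G (g' r) r := by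
    intro r hr
    have h1 : HasDerivAt (fun x => 2 * (k:ℝ) * (-Real.cos (u x))) (g' r) r := by
      have := (((hdiff r hr).cos).neg).const_mul (2 * (k:ℝ))
      have e : g' r = 2 * (k:ℝ) * -(-Real.sin (u r) * deriv u r) := by
        show 2 * (k:ℝ) * (Real.sin (u r) * deriv u r) = _
        ring
      rw [e]; exact this
    refine h1.congr_of_eventuallyEq ?_
    filter_upwards [isOpen_Ioi.mem_nhds hr] with x hx
    simp [hG, Set.mem_Ioi.mp hx]
  -- pointwise bound : |g' r| ≤ f r and g' r ≤ f r on Ioi 0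
  have hbound : ∀ r ∈ Set.Ioi (0 : ℝ), |g' r| ≤ f r := by
    intro r hr
    have hr0 : (0:ℝ) < r := hr
    set c := deriv u r
    set s := Real.sin (u r)
    have hfr : f r = (c ^ 2 * r ^ 2 + k ^ 2 * s ^ 2) / r := by
      show ((c) ^ 2 + k ^ 2 * s ^ 2 / r ^ 2) * r = _
      field_simp
    rw [hfr, le_div_iff₀ hr0]
    have habs : |g' r| = 2 * (k:ℝ) * (|s| * |c|) := by
      have h2 : |g' r| = |2 * (k:ℝ)| * (|s| * |c|) := by
        simp [hg', abs_mul, mul_assoc]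
        exact Or.inl rfl
      rw [h2, abs_of_nonneg (by positivity : (0:ℝ) ≤ 2 * (k:ℝ))]
    rw [habs]
    nlinarith [sq_nonneg (|c| * r - (k:ℝ) * |s|), sq_abs c, sq_abs s, abs_nonneg c,
      abs_nonneg s, mul_nonneg (abs_nonneg s) (abs_nonneg c)]
  have hfnonneg : ∀ r ∈ Set.Ioi (0 : ℝ), 0 ≤ f r := by
    intro r hr
    have hr0 : (0:ℝ) < r := hr
    have : (0:ℝ) ≤ (deriv u r) ^ 2 + k ^ 2 * Real.sin (u r) ^ 2 / r ^ 2 := by positivity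
    exact mul_nonneg this hr0.le
  -- integrability of g'
  have hcu : ContinuousOn u (Set.Ioi (0:ℝ)) := hu.continuousOn
  have hcd : ContinuousOn (deriv u) (Set.Ioi (0:ℝ)) :=
    hu.continuousOn_deriv_of_isOpen isOpen_Ioi le_rfl
  have hcg : ContinuousOn g' (Set.Ioi (0:ℝ)) :=
    continuousOn_const.mul ((Real.continuous_sin.comp_continuousOn hcu).mul hcd)
  have hmeas : AEStronglyMeasurable g' (volume.restrict (Set.Ioi (0:ℝ))) :=
    hcg.aestronglyMeasurable measurableSet_Ioi
  have hint : IntegrableOn g' (Set.Ioi (0:ℝ)) := by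
    refine hE.mono' hmeas ?_
    rw [ae_restrict_iff' measurableSet_Ioi]
    filter_upwards with r hr
    simpa [Real.norm_eq_abs] using hbound r hr
  -- continuity of G at 0 from the right
  have hcont0 : ContinuousWithinAt G (Set.Ici 0) 0 := by
    rw [← Set.Ioi_insert, continuousWithinAt_insert_self]
    have hlim : Filter.Tendsto (fun x => 2 * (k:ℝ) * (-Real.cos (u x)))
        (nhdsWithin 0 (Set.Ioi 0)) (nhds (2 * (k:ℝ) * (-Real.cos 0))) :=
      (((Real.continuous_cos.tendsto 0).comp h0).neg).const_mul _
    have : Filter.Tendsto G (nhdsWithin 0 (Set.Ioi 0)) (nhds (2 * (k:ℝ) * (-Real.cos 0))) := by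
      refine hlim.congr' ?_
      filter_upwards [self_mem_nhdsWithin] with x hx
      simp [hG, Set.mem_Ioi.mp hx]
    have hG0 : G 0 = 2 * (k:ℝ) * (-Real.cos 0) := by simp [hG]
    rw [ContinuousWithinAt, hG0]
    exact this
  -- limit of G at infinity
  have htop : Filter.Tendsto G Filter.atTop (nhds (2 * (k:ℝ))) := by
    have hlim : Filter.Tendsto (fun x => 2 * (k:ℝ) * (-Real.cos (u x)))
        Filter.atTop (nhds (2 * (k:ℝ) * (-Real.cos π))) :=
      (((Real.continuous_cos.tendsto π).comp hInf).neg).const_mul _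
    rw [Real.cos_pi] at hlim
    simp only [neg_neg, mul_one] at hlim
    refine hlim.congr' ?_
    filter_upwards [Filter.eventually_gt_atTop (0:ℝ)] with x hx
    simp [hG, hx]
  -- FTC on (0, ∞)
  have hFTC : ∫ r in Set.Ioi (0:ℝ), g' r = 2 * (k:ℝ) - G 0 :=
    integral_Ioi_of_hasDerivAt_of_tendsto hcont0 hGd hint htop
  have hG0 : G 0 = -(2 * (k:ℝ)) := by simp [hG]
  have hval : ∫ r in Set.Ioi (0:ℝ), g' r = 4 * (k:ℝ) := by
    rw [hFTC, hG0]; ring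
  calc (4:ℝ) * k = ∫ r in Set.Ioi (0:ℝ), g' r := hval.symm
    _ ≤ ∫ r in Set.Ioi (0:ℝ), f r := by
        refine setIntegral_mono_on hint hE measurableSet_Ioi ?_
        intro r hr
        exact le_trans (le_abs_self _) (hbound r hr)
end

section
/- Let u: (0,∞) → ℝ be continuously differentiable with ∫₀^∞ (u'(r)² + sin²(u(r))/r²) r dr < ∞. Then the limit L₀ = lim_{r→0⁺} u(r) exists, the limit L_∞ = lim_{r→∞} u(r) exists, and both L₀ and L_∞ are integer multiples of π. -/
open Real MeasureTheory Set Filter Topology intervalIntegral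

noncomputable def Gabs (x : ℝ) : ℝ := ∫ s in (0:ℝ)..x, |Real.sin s|

lemma absSin_cont : Continuous (fun s : ℝ => |Real.sin s|) := Real.continuous_sin.abs

lemma Gabs_hasDerivAt (x : ℝ) : HasDerivAt Gabs |Real.sin x| x :=
  (absSin_cont.integral_hasStrictDerivAt 0 x).hasDerivAt

lemma Gabs_continuous : Continuous Gabs := by
  have : Differentiable ℝ Gabs := fun x => (Gabs_hasDerivAt x).differentiableAt
  exact this.continuous

lemma sin_zeros_null : volume {x : ℝ | Real.sin x = 0} = 0 := by
  have h : {x : ℝ | Real.sin x = 0} ⊆ Set.range (fun n : ℤ => (n : ℝ) * π) := by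
    intro x hx
    rcases Real.sin_eq_zero_iff.1 hx with ⟨n, hn⟩
    exact ⟨n, hn⟩
  exact measure_mono_null h ((Set.countable_range _).measure_zero _)

lemma Gabs_sub (a b : ℝ) : Gabs b - Gabs a = ∫ s in a..b, |Real.sin s| := by
  have h1 : (∫ s in (0:ℝ)..a, |Real.sin s|) + (∫ s in a..b, |Real.sin s|)
      = ∫ s in (0:ℝ)..b, |Real.sin s| :=
    integral_add_adjacent_intervals (absSin_cont.intervalIntegrable _ _)
      (absSin_cont.intervalIntegrable _ _)
  simp only [Gabs]; linarith

lemma Gabs_strictMono : StrictMono Gabs := by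
  intro a b hab
  have key : 0 < ∫ s in a..b, |Real.sin s| := by
    rw [integral_of_le hab.le]
    rw [setIntegral_pos_iff_support_of_nonneg_ae]
    · have hsub : Ioc a b \ {x : ℝ | Real.sin x = 0} ⊆
          (Function.support fun s : ℝ => |Real.sin s|) ∩ Ioc a b := by
        rintro x ⟨hx1, hx2⟩
        exact ⟨by simpa [Function.mem_support, abs_eq_zero] using hx2, hx1⟩
      have h2 : volume (Ioc a b \ {x : ℝ | Real.sin x = 0}) = volume (Ioc a b) :=
        measure_diff_null sin_zeros_null
      have h3 : (0:ENNReal) < volume (Ioc a b) := by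
        simp [Real.volume_Ioc, hab]
      calc (0:ENNReal) < volume (Ioc a b) := h3
        _ = volume (Ioc a b \ {x : ℝ | Real.sin x = 0}) := h2.symm
        _ ≤ _ := measure_mono hsub
    · exact Filter.Eventually.of_forall (fun x => abs_nonneg _)
    · exact (absSin_cont.integrableOn_Ioc)
  have := Gabs_sub a b
  linarith

lemma absSin_periodic : Function.Periodic (fun s : ℝ => |Real.sin s|) π := by
  intro x; simp [Real.sin_add_pi]

lemma Gabs_add_pi (x : ℝ) : Gabs (x + π) = Gabs x + 2 := by
  have h1 : Gabs (x + π) - Gabs x = ∫ s in x..(x+π), |Real.sin s| := Gabs_sub _ _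
  have h2 : (∫ s in x..(x+π), |Real.sin s|) = ∫ s in (0:ℝ)..(0+π), |Real.sin s| :=
    absSin_periodic.intervalIntegral_add_eq x 0
  have h3 : (∫ s in (0:ℝ)..π, |Real.sin s|) = ∫ s in (0:ℝ)..π, Real.sin s := by
    apply integral_congr
    intro s hs
    rw [Set.uIcc_of_le Real.pi_nonneg] at hs
    exact abs_of_nonneg (Real.sin_nonneg_of_nonneg_of_le_pi hs.1 hs.2)
  rw [zero_add] at h2
  rw [h2, h3, integral_sin] at h1
  simp at h1; linarith

lemma Gabs_neg (x : ℝ) : Gabs (-x) = -Gabs x := by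
  have h : (∫ s in (0:ℝ)..x, |Real.sin (-s)|) = ∫ s in (-x)..(-(0:ℝ)), |Real.sin s| :=
    integral_comp_neg (fun s => |Real.sin s|)
  simp only [Real.sin_neg, abs_neg, neg_zero] at h
  have h2 : (∫ s in (-x)..(0:ℝ), |Real.sin s|) = -∫ s in (0:ℝ)..(-x), |Real.sin s| :=
    (integral_symm _ _)
  rw [h2] at h
  simp only [Gabs]
  linarith

lemma Gabs_nsmul (n : ℕ) : Gabs (n * π) = 2 * n := by
  induction n with
  | zero => simp [Gabs]
  | succ k ih =>
      have : ((k:ℝ)+1) * π = k * π + π := by ring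
      push_cast
      rw [this, Gabs_add_pi, ih]; ring

lemma Gabs_atTop : Filter.Tendsto Gabs Filter.atTop Filter.atTop := by
  apply tendsto_atTop_atTop_of_monotone Gabs_strictMono.monotone
  intro b
  obtain ⟨n, hn⟩ := exists_nat_ge (b / 2)
  refine ⟨n * π, ?_⟩
  rw [Gabs_nsmul]
  nlinarith
lemma Gabs_atBot : Filter.Tendsto Gabs Filter.atBot Filter.atBot := by
  apply tendsto_atBot_atBot_of_monotone Gabs_strictMono.monotone
  intro b
  obtain ⟨n, hn⟩ := exists_nat_ge (-b / 2)
  refine ⟨-(n * π), ?_⟩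
  rw [Gabs_neg, Gabs_nsmul]
  nlinarith

lemma Gabs_surjective : Function.Surjective Gabs :=
  Gabs_continuous.surjective Gabs_atTop Gabs_atBot

noncomputable def Giso : ℝ ≃o ℝ := StrictMono.orderIsoOfSurjective Gabs Gabs_strictMono Gabs_surjective

lemma Giso_symm_Gabs (x : ℝ) : Giso.symm (Gabs x) = x :=
  StrictMono.orderIsoOfSurjective_symm_apply_self Gabs Gabs_strictMono Gabs_surjective x

lemma Giso_symm_continuous : Continuous (Giso.symm : ℝ → ℝ) := OrderIso.continuous _

theorem stmt17 (u : ℝ → ℝ)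
    (hu : ContDiffOn ℝ 1 u (Set.Ioi 0))
    (hE : IntegrableOn
      (fun r : ℝ => ((deriv u r) ^ 2 + Real.sin (u r) ^ 2 / r ^ 2) * r) (Set.Ioi 0)) :
    ∃ L₀ Linf : ℝ,
      Filter.Tendsto u (nhdsWithin 0 (Set.Ioi 0)) (nhds L₀) ∧
      Filter.Tendsto u Filter.atTop (nhds Linf) ∧
      (∃ m : ℤ, L₀ = m * π) ∧ (∃ n : ℤ, Linf = n * π) := by
  set f : ℝ → ℝ := fun r => ((deriv u r) ^ 2 + Real.sin (u r) ^ 2 / r ^ 2) * r with hf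
  set h : ℝ → ℝ := fun r => |Real.sin (u r)| * deriv u r with hh
  have hucont : ContinuousOn u (Set.Ioi 0) := hu.continuousOn
  have hdcont : ContinuousOn (deriv u) (Set.Ioi 0) :=
    hu.continuousOn_deriv_of_isOpen isOpen_Ioi le_rfl
  have hhcont : ContinuousOn h (Set.Ioi 0) :=
    ((Real.continuous_sin.comp_continuousOn hucont).abs).mul hdcont
  -- pointwise bound
  have hbound : ∀ r ∈ Set.Ioi (0:ℝ), ‖h r‖ ≤ (1/2) * f r := by
    intro r hr
    have hr0 : (0:ℝ) < r := hr
    have h1 : ‖h r‖ = |Real.sin (u r)| * |deriv u r| := by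
      rw [Real.norm_eq_abs, abs_mul, abs_abs]
    rw [h1]
    simp only [hf]
    have e1 : 1 / 2 * ((deriv u r ^ 2 + Real.sin (u r) ^ 2 / r ^ 2) * r)
        = (deriv u r ^ 2 * r ^ 2 + Real.sin (u r) ^ 2) / (2 * r) := by
      field_simp
    rw [e1, le_div_iff₀ (by positivity)]
    nlinarith [sq_nonneg (|deriv u r| * r - |Real.sin (u r)|), sq_abs (deriv u r),
      sq_abs (Real.sin (u r)), abs_nonneg (deriv u r), abs_nonneg (Real.sin (u r)),
      mul_nonneg (mul_nonneg (abs_nonneg (Real.sin (u r))) (abs_nonneg (deriv u r))) hr0.le]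
  -- integrability of h
  have hhmeas : AEStronglyMeasurable h (volume.restrict (Set.Ioi 0)) :=
    hhcont.aestronglyMeasurable measurableSet_Ioi
  have hInt : IntegrableOn h (Set.Ioi 0) := by
    refine Integrable.mono' (hE.const_mul (1/2)) hhmeas ?_
    rw [ae_restrict_iff' measurableSet_Ioi]
    exact Filter.Eventually.of_forall hbound
  -- FTC
  have hFTC : ∀ a b : ℝ, 0 < a → a ≤ b →
      (∫ r in a..b, h r) = Gabs (u b) - Gabs (u a) := by
    intro a b ha hab
    have hsub : Set.uIcc a b ⊆ Set.Ioi 0 := by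
      rw [Set.uIcc_of_le hab]
      intro x hx; exact lt_of_lt_of_le ha hx.1
    refine integral_eq_sub_of_hasDerivAt (f := fun r => Gabs (u r)) (fun r hr => ?_) ((hhcont.mono hsub).intervalIntegrable)
    have hr0 : r ∈ Set.Ioi (0:ℝ) := hsub hr
    have hur : HasDerivAt u (deriv u r) r :=
      ((hu.differentiableOn one_ne_zero).differentiableAt (isOpen_Ioi.mem_nhds hr0)).hasDerivAt
    have := (Gabs_hasDerivAt (u r)).comp r hur
    exact this
  -- limit at infinity
  set I1 : ℝ := ∫ r in Set.Ioi 1, h r with hI1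
  have hT1 : Tendsto (fun b => ∫ r in (1:ℝ)..b, h r) atTop (𝓝 I1) :=
    intervalIntegral_tendsto_integral_Ioi 1
      (hInt.mono_set (Set.Ioi_subset_Ioi zero_le_one)) tendsto_id
  have hGtop : Tendsto (fun b => Gabs (u b)) atTop (𝓝 (Gabs (u 1) + I1)) := by
    apply (tendsto_const_nhds.add hT1).congr'
    filter_upwards [eventually_ge_atTop (1:ℝ)] with b hb
    rw [hFTC 1 b one_pos hb]; ring
  have hLinf : Tendsto u atTop (𝓝 (Giso.symm (Gabs (u 1) + I1))) := by
    have := (Giso_symm_continuous.tendsto _).comp hGtop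
    exact this.congr (fun b => Giso_symm_Gabs (u b))
  -- limit at zero
  have hInt01 : IntegrableOn h (Set.Icc 0 1) := by
    rw [integrableOn_Icc_iff_integrableOn_Ioc]
    exact hInt.mono_set Set.Ioc_subset_Ioi_self
  have hzero : Tendsto (fun x => ∫ t in Set.Ioc 0 x, h t)
      (nhdsWithin 0 (Set.Ioi 0)) (𝓝 0) := by
    have h0 : ContinuousWithinAt (fun x => ∫ t in Set.Ioc 0 x, h t) (Set.Icc 0 1) 0 :=
      continuousOn_primitive hInt01 0 (by norm_num)
    have h1 := h0.tendsto
    have hv : (∫ t in Set.Ioc (0:ℝ) (0:ℝ), h t) = 0 := by simp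
    rw [hv] at h1
    have h2 := h1.mono_left (nhdsWithin_mono 0 Set.Ioc_subset_Icc_self)
    rwa [nhdsWithin_Ioc_eq_nhdsGT one_pos] at h2
  have hsplit : ∀ a : ℝ, 0 < a → a ≤ 1 →
      Gabs (u a) = Gabs (u 1) - (∫ t in Set.Ioc 0 1, h t) + ∫ t in Set.Ioc 0 a, h t := by
    intro a ha ha1
    have e1 : (∫ r in a..(1:ℝ), h r) = ∫ t in Set.Ioc a 1, h t := integral_of_le ha1
    have e2 : (∫ t in Set.Ioc 0 a, h t) + (∫ t in Set.Ioc a 1, h t)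
        = ∫ t in Set.Ioc 0 1, h t := by
      rw [← setIntegral_union (Set.Ioc_disjoint_Ioc_of_le le_rfl) measurableSet_Ioc
        (hInt.mono_set (Set.Ioc_subset_Ioi_self)) (hInt.mono_set ?_),
        Set.Ioc_union_Ioc_eq_Ioc ha.le ha1]
      exact fun x hx => lt_trans ha hx.1
    have := hFTC a 1 ha ha1
    rw [e1] at this
    linarith
  have hG0 : Tendsto (fun a => Gabs (u a)) (nhdsWithin 0 (Set.Ioi 0))
      (𝓝 (Gabs (u 1) - (∫ t in Set.Ioc 0 1, h t) + 0)) := by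
    apply (tendsto_const_nhds.add hzero).congr'
    filter_upwards [Ioc_mem_nhdsGT_of_mem
      (⟨le_refl (0:ℝ), one_pos⟩ : (0:ℝ) ∈ Set.Ico (0:ℝ) 1)] with a ha
    rw [hsplit a ha.1 ha.2]
  have hL0 : Tendsto u (nhdsWithin 0 (Set.Ioi 0))
      (𝓝 (Giso.symm (Gabs (u 1) - (∫ t in Set.Ioc 0 1, h t) + 0))) := by
    have := (Giso_symm_continuous.tendsto _).comp hG0
    exact this.congr (fun b => Giso_symm_Gabs (u b))
  -- sin of the limit vanishes : zero side
  have key0 : ∀ L : ℝ, Tendsto u (nhdsWithin 0 (Set.Ioi 0)) (𝓝 L) → Real.sin L = 0 := by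
    intro L hL
    by_contra hs
    have hc : 0 < Real.sin L ^ 2 := by positivity
    have htend : Tendsto (fun r => Real.sin (u r) ^ 2) (nhdsWithin 0 (Set.Ioi 0))
        (𝓝 (Real.sin L ^ 2)) := ((Real.continuous_sin.tendsto L).comp hL).pow 2
    have hev : ∀ᶠ r in nhdsWithin 0 (Set.Ioi 0),
        Real.sin L ^ 2 / 2 ≤ Real.sin (u r) ^ 2 :=
      htend.eventually_const_le (by linarith)
    obtain ⟨ε, hε, hsub⟩ := (mem_nhdsGT_iff_exists_Ioc_subset).1 hev
    have hε0 : (0:ℝ) < ε := hε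
    have hfε : IntegrableOn f (Set.Ioc 0 ε) := hE.mono_set Set.Ioc_subset_Ioi_self
    have hbig : ∀ r ∈ Set.Ioc (0:ℝ) ε, ‖(Real.sin L ^ 2 / 2) * r⁻¹‖ ≤ f r := by
      intro r hr
      have hr0 : (0:ℝ) < r := hr.1
      have h1 : Real.sin L ^ 2 / 2 ≤ Real.sin (u r) ^ 2 := hsub hr
      have hnorm : ‖(Real.sin L ^ 2 / 2) * r⁻¹‖ = (Real.sin L ^ 2 / 2) * r⁻¹ := by
        rw [Real.norm_eq_abs, abs_of_nonneg]; positivity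
      rw [hnorm]
      simp only [hf]
      have e : (deriv u r ^ 2 + Real.sin (u r) ^ 2 / r ^ 2) * r
          = deriv u r ^ 2 * r + Real.sin (u r) ^ 2 * r⁻¹ := by
        field_simp
      rw [e]
      have h2 : (Real.sin L ^ 2 / 2) * r⁻¹ ≤ Real.sin (u r) ^ 2 * r⁻¹ :=
        mul_le_mul_of_nonneg_right h1 (by positivity)
      nlinarith [sq_nonneg (deriv u r), hr0]
    have hIone : IntegrableOn (fun r => (Real.sin L ^ 2 / 2) * r⁻¹) (Set.Ioc 0 ε) := by
      refine Integrable.mono' hfε ?_ ?_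
      · exact ((measurable_id.inv).const_mul _).aestronglyMeasurable
      · rw [ae_restrict_iff' measurableSet_Ioc]
        exact Filter.Eventually.of_forall hbig
    have hIinv : IntegrableOn (fun r : ℝ => r⁻¹) (Set.Ioc 0 ε) := by
      have h3 := hIone.const_mul ((Real.sin L ^ 2 / 2)⁻¹)
      have hc' : (Real.sin L ^ 2 / 2) ≠ 0 := by positivity
      refine h3.congr' ?_ ?_
      · exact (measurable_id.inv).aestronglyMeasurable
      · refine Filter.Eventually.of_forall (fun r => ?_)
        rw [← mul_assoc, inv_mul_cancel₀ hc', one_mul]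
    have h4 : IntervalIntegrable (fun r : ℝ => r⁻¹) volume 0 ε :=
      (intervalIntegrable_iff_integrableOn_Ioc_of_le hε0.le).2 hIinv
    rw [intervalIntegrable_inv_iff] at h4
    rcases h4 with h4 | h4
    · exact absurd h4.symm (ne_of_gt hε0)
    · exact h4 Set.left_mem_uIcc
  -- sin of the limit vanishes : infinity side
  have keyInf : ∀ L : ℝ, Tendsto u atTop (𝓝 L) → Real.sin L = 0 := by
    intro L hL
    by_contra hs
    have hc : 0 < Real.sin L ^ 2 := by positivity
    have htend : Tendsto (fun r => Real.sin (u r) ^ 2) atTop (𝓝 (Real.sin L ^ 2)) :=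
      ((Real.continuous_sin.tendsto L).comp hL).pow 2
    have hev : ∀ᶠ r in atTop, Real.sin L ^ 2 / 2 ≤ Real.sin (u r) ^ 2 :=
      htend.eventually_const_le (by linarith)
    obtain ⟨R, hR⟩ := (hev.and (eventually_gt_atTop (0:ℝ))).exists_forall_of_atTop
    set R' := max R 1 with hR'
    have hfR : IntegrableOn f (Set.Ioi R') := by
      refine hE.mono_set (fun x hx => ?_)
      exact lt_trans (lt_of_lt_of_le zero_lt_one (le_max_right R 1)) hx
    have hbig : ∀ r ∈ Set.Ioi R', ‖(Real.sin L ^ 2 / 2) * r⁻¹‖ ≤ f r := by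
      intro r hr
      have hrR : R ≤ r := le_trans (le_max_left R 1) (le_of_lt hr)
      obtain ⟨h1, hr0⟩ := hR r hrR
      have hnorm : ‖(Real.sin L ^ 2 / 2) * r⁻¹‖ = (Real.sin L ^ 2 / 2) * r⁻¹ := by
        rw [Real.norm_eq_abs, abs_of_nonneg]; positivity
      rw [hnorm]
      simp only [hf]
      have e : (deriv u r ^ 2 + Real.sin (u r) ^ 2 / r ^ 2) * r
          = deriv u r ^ 2 * r + Real.sin (u r) ^ 2 * r⁻¹ := by
        field_simp
      rw [e]
      have h2 : (Real.sin L ^ 2 / 2) * r⁻¹ ≤ Real.sin (u r) ^ 2 * r⁻¹ :=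
        mul_le_mul_of_nonneg_right h1 (by positivity)
      nlinarith [sq_nonneg (deriv u r), hr0]
    have hIone : IntegrableOn (fun r => (Real.sin L ^ 2 / 2) * r⁻¹) (Set.Ioi R') := by
      refine Integrable.mono' hfR ?_ ?_
      · exact ((measurable_id.inv).const_mul _).aestronglyMeasurable
      · rw [ae_restrict_iff' measurableSet_Ioi]
        exact Filter.Eventually.of_forall hbig
    have hIinv : IntegrableOn (fun r : ℝ => r⁻¹) (Set.Ioi R') := by
      have h3 := hIone.const_mul ((Real.sin L ^ 2 / 2)⁻¹)
      have hc' : (Real.sin L ^ 2 / 2) ≠ 0 := by positivity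
      refine h3.congr' ?_ ?_
      · exact (measurable_id.inv).aestronglyMeasurable
      · refine Filter.Eventually.of_forall (fun r => ?_)
        rw [← mul_assoc, inv_mul_cancel₀ hc', one_mul]
    exact not_IntegrableOn_Ioi_inv hIinv
  refine ⟨_, _, hL0, hLinf, ?_, ?_⟩
  · obtain ⟨n, hn⟩ := Real.sin_eq_zero_iff.1 (key0 _ hL0)
    exact ⟨n, hn.symm⟩
  · obtain ⟨n, hn⟩ := Real.sin_eq_zero_iff.1 (keyInf _ hLinf)
    exact ⟨n, hn.symm⟩
end
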